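/- Let G be a locally union of complete split graph in which the set N_G of tips of induced diamonds is independent, and suppose G contains an induced subgraph isomorphic to S_4 (a diamond with tips x, y plus one additional vertex r adjacent exactly to x and y). Then the two degree-3 vertices of the diamond and the vertex r all lie outside N_G, while x, y ∈ N_G; in particular G contains an induced copy of the partitioned graph H_4 with respect to the partition (V \ N_G, N_G). -/

import Mathlib

open SimpleGraph

universe u
variable {V : Type u}

/-- The diamond graph: `K₄` minus the edge `{0,1}`; its tips are `0` and `1`. -/
def diamondGraph : SimpleGraph (Fin 4) :=
  SimpleGraph.fromRel (fun a b =>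
    (a = 0 ∧ b = 2) ∨ (a = 0 ∧ b = 3) ∨ (a = 1 ∧ b = 2) ∨ (a = 1 ∧ b = 3) ∨ (a = 2 ∧ b = 3))

/-- The path on four vertices. -/
def pathGraph4 : SimpleGraph (Fin 4) :=
  SimpleGraph.fromRel (fun a b => (a = 0 ∧ b = 1) ∨ (a = 1 ∧ b = 2) ∨ (a = 2 ∧ b = 3))

/-- The paw: a triangle `0,1,2` plus a pendant vertex `3` adjacent to `0`. -/
def pawGraph : SimpleGraph (Fin 4) :=
  SimpleGraph.fromRel (fun a b =>
    (a = 0 ∧ b = 1) ∨ (a = 1 ∧ b = 2) ∨ (a = 0 ∧ b = 2) ∨ (a = 0 ∧ b = 3))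

/-- `K₂ + K₁`: an edge `0-1` and an isolated vertex `2`. -/
def k2k1Graph : SimpleGraph (Fin 3) :=
  SimpleGraph.fromRel (fun a b => a = 0 ∧ b = 1)

/-- The chordless cycle on four vertices. -/
def cycleGraph4 : SimpleGraph (Fin 4) :=
  SimpleGraph.fromRel (fun a b =>
    (a = 0 ∧ b = 1) ∨ (a = 1 ∧ b = 2) ∨ (a = 2 ∧ b = 3) ∨ (a = 3 ∧ b = 0))

/-- `P₄ + K₁`: a path `0-1-2-3` and an isolated vertex `4`. -/
def p4k1Graph : SimpleGraph (Fin 5) :=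
  SimpleGraph.fromRel (fun a b => (a = 0 ∧ b = 1) ∨ (a = 1 ∧ b = 2) ∨ (a = 2 ∧ b = 3))

/-- `P₃ + 2K₁`: a path `0-1-2` and isolated vertices `3,4`. -/
def p3TwoK1Graph : SimpleGraph (Fin 5) :=
  SimpleGraph.fromRel (fun a b => (a = 0 ∧ b = 1) ∨ (a = 1 ∧ b = 2))

/-- `2K₂ + K₁`: edges `0-1` and `2-3`, and an isolated vertex `4`. -/
def twoK2K1Graph : SimpleGraph (Fin 5) :=
  SimpleGraph.fromRel (fun a b => (a = 0 ∧ b = 1) ∨ (a = 2 ∧ b = 3))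

/-- `(K, S)` is a complete split partition of the subgraph of `G` induced by the set `A`:
`K ∪ S = A`, `K` and `S` are disjoint, `K` is a clique, `S` is independent, and `K` is
complete to `S`. -/
def IsCSPartWithin (G : SimpleGraph V) (A K S : Set V) : Prop :=
  K ∪ S = A ∧ Disjoint K S ∧
    (∀ a ∈ K, ∀ b ∈ K, a ≠ b → G.Adj a b) ∧
    (∀ a ∈ S, ∀ b ∈ S, ¬ G.Adj a b) ∧
    (∀ a ∈ K, ∀ b ∈ S, G.Adj a b)

/-- A graph is a complete split graph if it admits a complete split partition. -/
def IsCompleteSplit (G : SimpleGraph V) : Prop :=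
  ∃ K S : Set V, IsCSPartWithin G Set.univ K S

/-- The vertex set of the connected component of the subgraph of `G` induced by `A`
containing the vertex `z`. -/
def compSet (G : SimpleGraph V) (A : Set V) (z : V) : Set V :=
  {w | w ∈ A ∧ Relation.ReflTransGen (fun a b => G.Adj a b ∧ a ∈ A ∧ b ∈ A) z w}

/-- `G` is locally union of complete split: for every vertex `v`, every connected component
of the subgraph induced by the open neighborhood of `v` is a complete split graph. -/
def LUCS (G : SimpleGraph V) : Prop :=
  ∀ v : V, ∀ z ∈ G.neighborSet v,
    ∃ K S : Set V, IsCSPartWithin G (compSet G (G.neighborSet v) z) K S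

/-- `x` is a tip of some induced diamond of `G`. -/
def IsTip (G : SimpleGraph V) (x : V) : Prop :=
  ∃ f : diamondGraph ↪g G, x = f 0 ∨ x = f 1

/-- The set `N_G` of vertices of `G` that are tips of induced diamonds. -/
def tipSet (G : SimpleGraph V) : Set V := {x | IsTip G x}

/-- `x` and `y` are the two tips of a common induced diamond of `G`. -/
def TipPair (G : SimpleGraph V) (x y : V) : Prop :=
  ∃ f : diamondGraph ↪g G, (x = f 0 ∧ y = f 1) ∨ (x = f 1 ∧ y = f 0)

/-- `G` has no induced diamond. -/
def DiamondFree (G : SimpleGraph V) : Prop := IsEmpty (diamondGraph ↪g G)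

/-- `N` is an independent set of `G`. -/
def IsIndep (G : SimpleGraph V) (N : Set V) : Prop := ∀ x ∈ N, ∀ y ∈ N, ¬ G.Adj x y

/-- `G` is probe diamond-free: the vertices can be partitioned into probes and an
independent set `N` of nonprobes such that adding some set of non-edges with both
endpoints in `N` yields a diamond-free graph. -/
def ProbeDiamondFree (G : SimpleGraph V) : Prop :=
  ∃ N : Set V, IsIndep G N ∧ ∃ F : SimpleGraph V,
    (∀ x y : V, F.Adj x y → x ∈ N ∧ y ∈ N ∧ ¬ G.Adj x y) ∧ DiamondFree (G ⊔ F)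

theorem stmt16 (G : SimpleGraph V) (hl : LUCS G) (hind : IsIndep G (tipSet G))
    (x y u z r : V) (hxy : x ≠ y) (hru : r ≠ u) (hrz : r ≠ z)
    (huz : G.Adj u z) (hxu : G.Adj x u) (hxz : G.Adj x z)
    (hyu : G.Adj y u) (hyz : G.Adj y z) (hnxy : ¬ G.Adj x y)
    (hrx : G.Adj r x) (hry : G.Adj r y) (hnru : ¬ G.Adj r u) (hnrz : ¬ G.Adj r z) :
    u ∉ tipSet G ∧ z ∉ tipSet G ∧ r ∉ tipSet G ∧ x ∈ tipSet G ∧ y ∈ tipSet G := by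
  have hf : ∃ f : diamondGraph ↪g G, f 0 = x ∧ f 1 = y := by
    have hxu' := hxu.ne
    have hxz' := hxz.ne
    have hyu' := hyu.ne
    have hyz' := hyz.ne
    have huz' := huz.ne
    have hnyx : ¬ G.Adj y x := fun h => hnxy h.symm
    refine ⟨⟨⟨![x, y, u, z], ?_⟩, ?_⟩, rfl, rfl⟩
    · intro a b h
      fin_cases a <;> fin_cases b <;>
        simp_all [Matrix.cons_val_zero, Matrix.cons_val_one, Matrix.head_cons] <;>
        first
          | rfl
          | (exact absurd h (by assumption))
          | (exact absurd h.symm (by assumption))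
    · intro a b
      fin_cases a <;> fin_cases b <;>
        simp [diamondGraph, SimpleGraph.fromRel_adj, Matrix.cons_val_zero,
          Matrix.cons_val_one, Matrix.head_cons, hxy, hxu', hxz', hyu', hyz', huz',
          hnxy, hnyx, hxu, hxz, hyu, hyz, huz, hxu.symm, hxz.symm, hyu.symm, hyz.symm,
          huz.symm, G.irrefl, DFunLike.coe] <;>
        decide
  obtain ⟨f, hf0, hf1⟩ := hf
  have hx : x ∈ tipSet G := ⟨f, Or.inl hf0.symm⟩
  have hy : y ∈ tipSet G := ⟨f, Or.inr hf1.symm⟩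
  refine ⟨fun hu => hind x hx u hu hxu, fun hz => hind x hx z hz hxz,
    fun hr => hind r hr x hx hrx, hx, hy⟩
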